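/- Let ψ: ℝ^D → ℂ be polynomially bounded, i.e. ‖1_{C_1(x)} ψ‖ ≤ C(1 + |x|_∞)^t for all x ∈ ℝ^D and some constants C, t > 0. Suppose there are constants m, ρ, ρ' ∈ (0,1), m > 0, and a sequence of scales L_k → ∞ such that for all k large and all x with |x − x_0|_∞ ≥ b_k L_k/(1−ρ) one has ‖1_{C_1(x)} ψ‖ ≤ (C' 3^{Nd})^{3ρ|x−x_0|/L_k} e^{−3mρ|x−x_0|} · C(1 + |x_0| + bL_{k+1})^t L_{k+1}^{Nd}, where L_{k+1} ≤ 2L_k^{3/2} and b_k ≤ B. Then for every ρ' ∈ (0,1) there exists R_0 such that ‖1_{C_1(x)} ψ‖ ≤ e^{−ρρ' m |x−x_0|} whenever |x − x_0|_∞ ≥ R_0. -/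
import Mathlib


open Filter Real

/-- Converting the iterated multi-scale bound (with subexponential
prefactor and polynomial factors) into clean exponential decay: here `f x` stands for
`‖1_{C_1(x)} ψ‖` for a polynomially bounded generalized eigenfunction `ψ`. -/
theorem subexponential_to_exponential_decay
    (D Nd : ℕ) (x₀ : Fin D → ℝ)
    (f : (Fin D → ℝ) → ℝ) (hf0 : ∀ x, 0 ≤ f x)
    (C t : ℝ) (hC : 0 < C) (ht : 0 < t)
    (hpoly : ∀ x, f x ≤ C * (1 + ‖x‖) ^ t)
    (C' m ρ b B : ℝ) (hC' : 1 ≤ C') (hm : 0 < m) (hρ0 : 0 < ρ) (hρ1 : ρ < 1)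
    (hb : 0 < b) (hB : 0 < B)
    (bk : ℕ → ℝ) (hbk : ∀ k, 0 < bk k ∧ bk k ≤ B)
    (L : ℕ → ℝ) (hL1 : ∀ k, 1 ≤ L k)
    (hLtop : Tendsto L atTop atTop)
    (hLgrow : ∀ k, L (k + 1) ≤ 2 * L k ^ ((3 : ℝ) / 2))
    (K : ℕ)
    (hmain : ∀ k, K ≤ k → ∀ x : Fin D → ℝ,
      bk k * L k / (1 - ρ) ≤ dist x x₀ →
      f x ≤ (C' * 3 ^ Nd) ^ (3 * ρ * dist x x₀ / L k) *
        Real.exp (-(3 * m * ρ * dist x x₀)) *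
        (C * (1 + ‖x₀‖ + b * L (k + 1)) ^ t * L (k + 1) ^ Nd)) :
    ∀ ρ' : ℝ, 0 < ρ' → ρ' < 1 → ∃ R₀ : ℝ, ∀ x : Fin D → ℝ,
      R₀ ≤ dist x x₀ → f x ≤ Real.exp (-(ρ * ρ' * m * dist x x₀)) := by
  intro ρ' hρ'0 hρ'1
  set c := C' * 3 ^ Nd with hc_def
  have hc1 : (1 : ℝ) ≤ c := by
    have h3 : (1 : ℝ) ≤ (3 : ℝ) ^ Nd := one_le_pow₀ (by norm_num)
    nlinarith
  have hcpos : (0 : ℝ) < c := lt_of_lt_of_le one_pos hc1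
  have hlogc : 0 ≤ Real.log c := Real.log_nonneg hc1
  obtain ⟨k, hkK, hkL⟩ : ∃ k, K ≤ k ∧ 3 * Real.log c / m ≤ L k := by
    have h1 := hLtop.eventually (eventually_ge_atTop (3 * Real.log c / m))
    exact ((eventually_ge_atTop K).and h1).exists
  have hLkpos : (0 : ℝ) < L k := lt_of_lt_of_le one_pos (hL1 k)
  have hLk1pos : (0 : ℝ) < L (k + 1) := lt_of_lt_of_le one_pos (hL1 (k + 1))
  have hbase : (0 : ℝ) < 1 + ‖x₀‖ + b * L (k + 1) := by
    have := norm_nonneg x₀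
    nlinarith
  set A := C * (1 + ‖x₀‖ + b * L (k + 1)) ^ t * L (k + 1) ^ Nd with hA_def
  have hA : 0 < A := by
    apply mul_pos (mul_pos hC (Real.rpow_pos_of_pos hbase t)) (pow_pos hLk1pos Nd)
  have h1ρ : (0 : ℝ) < 1 - ρ := by linarith
  refine ⟨max (B * L k / (1 - ρ)) (Real.log A / (m * ρ)), ?_⟩
  intro x hx
  set r := dist x x₀ with hr_def
  have hr1 : B * L k / (1 - ρ) ≤ r := le_trans (le_max_left _ _) hx
  have hr2 : Real.log A / (m * ρ) ≤ r := le_trans (le_max_right _ _) hx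
  have hrpos : 0 < r := lt_of_lt_of_le (by positivity) hr1
  have happ : bk k * L k / (1 - ρ) ≤ r := by
    refine le_trans ?_ hr1
    have hbkB := (hbk k).2
    apply div_le_div_of_nonneg_right ?_ h1ρ.le
    exact mul_le_mul_of_nonneg_right hbkB hLkpos.le
  have hbound := hmain k hkK x happ
  rw [Real.rpow_def_of_pos hcpos] at hbound
  have hlogA : Real.log A ≤ m * ρ * r := by
    rw [div_le_iff₀ (mul_pos hm hρ0)] at hr2
    linarith
  have hterm : Real.log c * (3 * ρ * r / L k) ≤ m * ρ * r := by
    rw [mul_div_assoc', div_le_iff₀ hLkpos]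
    rw [div_le_iff₀ hm] at hkL
    nlinarith [mul_le_mul_of_nonneg_right hkL (mul_nonneg hρ0.le hrpos.le)]
  calc f x ≤ Real.exp (Real.log c * (3 * ρ * r / L k)) *
        Real.exp (-(3 * m * ρ * r)) * A := hbound
    _ = Real.exp (Real.log c * (3 * ρ * r / L k) + -(3 * m * ρ * r) + Real.log A) := by
        rw [Real.exp_add, Real.exp_add, Real.exp_log hA]
    _ ≤ Real.exp (-(ρ * ρ' * m * r)) := by
        apply Real.exp_le_exp.mpr
        nlinarith [mul_pos (mul_pos hm hρ0) hrpos]
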